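/- Plaut's theorem (G-delta geodesic), κ = 0 case: Let L be a complete length metric space satisfying the CBB(0) comparison and let p ∈ L. Then there is a dense Gδ subset W ⊆ L such that for every q ∈ W there exists a geodesic from p to q, and this geodesic is unique: any two geodesics from p to q agree at every parameter t ∈ [0,1]. -/

import Mathlib

/-- Comparison angle (model angle for curvature `0`) at `p` between `x` and `y`. -/
noncomputable def cmpAngle {X : Type*} [MetricSpace X] (p x y : X) : ℝ :=
  Real.arccos ((dist p x ^ 2 + dist p y ^ 2 - dist x y ^ 2) / (2 * dist p x * dist p y))

/-- The CBB(0) four-point comparison: curvature `≥ 0` in the sense of Alexandrov. -/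
def CBB0Cmp (X : Type*) [MetricSpace X] : Prop :=
  ∀ p x₁ x₂ x₃ : X, p ≠ x₁ → p ≠ x₂ → p ≠ x₃ →
    cmpAngle p x₁ x₂ + cmpAngle p x₂ x₃ + cmpAngle p x₃ x₁ ≤ 2 * Real.pi

/-- The CAT(0) four-point comparison. -/
def CAT0Cmp (X : Type*) [MetricSpace X] : Prop :=
  ∀ p₁ p₂ x₁ x₂ : X, p₁ ≠ p₂ → p₁ ≠ x₁ → p₁ ≠ x₂ → p₂ ≠ x₁ → p₂ ≠ x₂ →
    cmpAngle p₁ x₁ x₂ ≤ cmpAngle p₁ p₂ x₁ + cmpAngle p₁ p₂ x₂ ∨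
    cmpAngle p₂ x₁ x₂ ≤ cmpAngle p₂ p₁ x₁ + cmpAngle p₂ p₁ x₂

/-- Midpoint characterization of the length condition (for complete spaces). -/
def LengthMid (X : Type*) [MetricSpace X] : Prop :=
  ∀ x y : X, ∀ ε : ℝ, 0 < ε → ∃ z : X,
    dist x z ≤ dist x y / 2 + ε ∧ dist z y ≤ dist x y / 2 + ε

/-- A geodesic from `p` to `q`, affinely parametrized by `[0,1]`. -/
def IsGeodesicP {X : Type*} [MetricSpace X] (γ : ℝ → X) (p q : X) : Prop :=
  γ 0 = p ∧ γ 1 = q ∧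
    ∀ s ∈ Set.Icc (0:ℝ) 1, ∀ t ∈ Set.Icc (0:ℝ) 1, dist (γ s) (γ t) = |s - t| * dist p q

/-- A metrically convex subset: together with any two points it contains
every point lying between them. -/
def MConvexSet {X : Type*} [MetricSpace X] (K : Set X) : Prop :=
  ∀ x ∈ K, ∀ y ∈ K, ∀ z : X, dist x z + dist z y = dist x y → z ∈ K

section pgAux
variable {L : Type*} [MetricSpace L]

lemma pg_arg_bounds {p x y : L} (hx : p ≠ x) (hy : p ≠ y) :
    -1 ≤ (dist p x ^ 2 + dist p y ^ 2 - dist x y ^ 2) / (2 * dist p x * dist p y) ∧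
    (dist p x ^ 2 + dist p y ^ 2 - dist x y ^ 2) / (2 * dist p x * dist p y) ≤ 1 := by
  have hA : 0 < dist p x := dist_pos.2 hx
  have hB : 0 < dist p y := dist_pos.2 hy
  have h1 : dist x y ≤ dist x p + dist p y := dist_triangle _ _ _
  have h2 : dist p y ≤ dist p x + dist x y := dist_triangle _ _ _
  have h3 : dist p x ≤ dist p y + dist y x := dist_triangle _ _ _
  rw [dist_comm x p] at h1
  rw [dist_comm y x] at h3
  have hD : 0 < 2 * dist p x * dist p y := by positivity
  constructor
  · rw [le_div_iff₀ hD]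
    nlinarith [dist_nonneg (x := x) (y := y)]
  · rw [div_le_iff₀ hD]
    nlinarith [dist_nonneg (x := x) (y := y)]

lemma pg_cos_cmpAngle {p x y : L} (hx : p ≠ x) (hy : p ≠ y) :
    Real.cos (cmpAngle p x y)
      = (dist p x ^ 2 + dist p y ^ 2 - dist x y ^ 2) / (2 * dist p x * dist p y) :=
  Real.cos_arccos (pg_arg_bounds hx hy).1 (pg_arg_bounds hx hy).2

lemma pg_dist_sq {p x y : L} (hx : p ≠ x) (hy : p ≠ y) :
    dist x y ^ 2 = dist p x ^ 2 + dist p y ^ 2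
      - 2 * dist p x * dist p y * Real.cos (cmpAngle p x y) := by
  have hA : (0:ℝ) < dist p x := dist_pos.2 hx
  have hB : (0:ℝ) < dist p y := dist_pos.2 hy
  rw [pg_cos_cmpAngle hx hy]
  field_simp
  ring

lemma pg_cmpAngle_nonneg (p x y : L) : 0 ≤ cmpAngle p x y := Real.arccos_nonneg _

lemma pg_cmpAngle_le_pi (p x y : L) : cmpAngle p x y ≤ Real.pi := Real.arccos_le_pi _

lemma pg_cmpAngle_comm (p x y : L) : cmpAngle p x y = cmpAngle p y x := by
  unfold cmpAngle
  rw [dist_comm x y]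
  ring_nf

lemma pg_cos_le {p x y : L} {σ : ℝ} (hx : p ≠ x) (hy : p ≠ y) (hσ : 0 ≤ σ)
    (hC : dist p x + dist p y - σ ≤ dist x y) :
    Real.cos (cmpAngle p x y) ≤ -1 + σ * (1 / dist p x + 1 / dist p y) := by
  have hA : (0:ℝ) < dist p x := dist_pos.2 hx
  have hB : (0:ℝ) < dist p y := dist_pos.2 hy
  have htri : dist x y ≤ dist p x + dist p y := by
    have := dist_triangle x p y; rwa [dist_comm x p] at this
  rw [pg_cos_cmpAngle hx hy]
  rw [div_le_iff₀ (by positivity)]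
  have hfac : (dist p x + dist p y - dist x y) * (dist p x + dist p y + dist x y)
      ≤ σ * (2 * (dist p x + dist p y)) := by
    apply mul_le_mul (by linarith) (by linarith) (by positivity) hσ
  have hexp : 1 / dist p x + 1 / dist p y = (dist p x + dist p y) / (dist p x * dist p y) := by
    field_simp; ring
  rw [hexp]
  have h2 : σ * ((dist p x + dist p y) / (dist p x * dist p y)) * (2 * dist p x * dist p y)
      = σ * (2 * (dist p x + dist p y)) := by
    field_simp
  nlinarith [sq_nonneg (dist x y)]
/-- purely real auxiliary estimate -/
lemma pg_real_aux {α α' γ η η' : ℝ} (hγ0 : 0 ≤ γ)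
    (hα0 : 0 ≤ α) (hα'0 : 0 ≤ α') (hαπ : α ≤ Real.pi) (hα'π : α' ≤ Real.pi)
    (hsum : γ + α' + α ≤ 2 * Real.pi)
    (hcα : Real.cos α ≤ -1 + η) (hcα' : Real.cos α' ≤ -1 + η') :
    1 - Real.cos γ ≤ Real.pi ^ 2 / 2 * (η + η') := by
  have hπ := Real.pi_pos
  set s := Real.pi - α with hs
  set s' := Real.pi - α' with hs'
  have hs0 : 0 ≤ s := by simp [hs]; linarith
  have hs0' : 0 ≤ s' := by simp [hs']; linarith
  have hsπ : s ≤ Real.pi := by simp [hs]; linarith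
  have hsπ' : s' ≤ Real.pi := by simp [hs']; linarith
  have hcs : 1 - η ≤ Real.cos s := by rw [hs, Real.cos_pi_sub]; linarith
  have hcs' : 1 - η' ≤ Real.cos s' := by rw [hs', Real.cos_pi_sub]; linarith
  have hη0 : 0 ≤ η := by have := Real.neg_one_le_cos α; linarith
  have hη0' : 0 ≤ η' := by have := Real.neg_one_le_cos α'; linarith
  have hsq : s ^ 2 ≤ Real.pi ^ 2 / 2 * η := by
    have h1 := Real.cos_le_one_sub_mul_cos_sq (x := s) (by rw [abs_of_nonneg hs0]; exact hsπ)
    have h2 : 2 / Real.pi ^ 2 * s ^ 2 ≤ η := by linarith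
    have h3 : s ^ 2 = Real.pi ^ 2 / 2 * (2 / Real.pi ^ 2 * s ^ 2) := by field_simp
    rw [h3]
    exact mul_le_mul_of_nonneg_left h2 (by positivity)
  have hsq' : s' ^ 2 ≤ Real.pi ^ 2 / 2 * η' := by
    have h1 := Real.cos_le_one_sub_mul_cos_sq (x := s') (by rw [abs_of_nonneg hs0']; exact hsπ')
    have h2 : 2 / Real.pi ^ 2 * s' ^ 2 ≤ η' := by linarith
    have h3 : s' ^ 2 = Real.pi ^ 2 / 2 * (2 / Real.pi ^ 2 * s' ^ 2) := by field_simp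
    rw [h3]
    exact mul_le_mul_of_nonneg_left h2 (by positivity)
  have hγle : γ ≤ s + s' := by rw [hs, hs']; linarith
  have h1 : 1 - γ ^ 2 / 2 ≤ Real.cos γ := Real.one_sub_sq_div_two_le_cos
  have h2 : γ ^ 2 ≤ (s + s') ^ 2 := sq_le_sq' (by linarith) hγle
  nlinarith [sq_nonneg (s - s')]

/-- Core quantitative non-branching estimate from the CBB(0) comparison. -/
lemma pg_core (hcbb : CBB0Cmp L) {q z z' r : L} {σ σ' : ℝ}
    (hz : q ≠ z) (hz' : q ≠ z') (hr : q ≠ r) (hσ : 0 ≤ σ) (hσ' : 0 ≤ σ')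
    (hC : dist q z + dist q r - σ ≤ dist z r)
    (hC' : dist q z' + dist q r - σ' ≤ dist z' r) :
    dist z z' ^ 2 ≤ (dist q z - dist q z') ^ 2 + Real.pi ^ 2 * (dist q z * dist q z') *
      (σ * (1 / dist q z + 1 / dist q r) + σ' * (1 / dist q z' + 1 / dist q r)) := by
  have hquad := hcbb q z z' r hz hz' hr
  rw [pg_cmpAngle_comm q r z] at hquad
  have key : 1 - Real.cos (cmpAngle q z z') ≤ Real.pi ^ 2 / 2 *
      (σ * (1 / dist q z + 1 / dist q r) + σ' * (1 / dist q z' + 1 / dist q r)) :=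
    pg_real_aux (pg_cmpAngle_nonneg q z z') (pg_cmpAngle_nonneg q z r)
      (pg_cmpAngle_nonneg q z' r) (pg_cmpAngle_le_pi q z r) (pg_cmpAngle_le_pi q z' r)
      (by linarith) (pg_cos_le hz hr hσ hC) (pg_cos_le hz' hr hσ' hC')
  have hA : (0:ℝ) < dist q z := dist_pos.2 hz
  have hA' : (0:ℝ) < dist q z' := dist_pos.2 hz'
  have hlaw := pg_dist_sq hz hz'
  have h4 : 2 * dist q z * dist q z' * (1 - Real.cos (cmpAngle q z z'))
      ≤ Real.pi ^ 2 * (dist q z * dist q z') *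
        (σ * (1 / dist q z + 1 / dist q r) + σ' * (1 / dist q z' + 1 / dist q r)) := by
    calc 2 * dist q z * dist q z' * (1 - Real.cos (cmpAngle q z z'))
        ≤ 2 * dist q z * dist q z' * (Real.pi ^ 2 / 2 *
          (σ * (1 / dist q z + 1 / dist q r) + σ' * (1 / dist q z' + 1 / dist q r))) :=
          mul_le_mul_of_nonneg_left key (by positivity)
      _ = _ := by ring
  have h5 : dist q z ^ 2 + dist q z' ^ 2
        - 2 * dist q z * dist q z' * Real.cos (cmpAngle q z z')
      = (dist q z - dist q z') ^ 2
        + 2 * dist q z * dist q z' * (1 - Real.cos (cmpAngle q z z')) := by ring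
  rw [hlaw, h5]
  linarith
/-- Extendability (with relative error) of the pair `(p,q)` beyond `q`. -/
def pg_Ext (p q : L) : Prop :=
  ∀ θ : ℝ, 0 < θ → ∃ r : L, 0 < dist q r ∧
    dist p q + dist q r - θ * min (dist q r) (dist p q) < dist p r

set_option maxHeartbeats 1000000 in
/-- Near-uniqueness of approximate `t`-points. -/
lemma pg_near_unique (hcbb : CBB0Cmp L) {p q : L} (hpq : 0 < dist p q)
    (hext : pg_Ext p q) {t : ℝ} (ht0 : 0 < t) (ht1 : t < 1) :
    ∀ ε : ℝ, 0 < ε → ∃ δ : ℝ, 0 < δ ∧ ∀ z z' : L,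
      dist p z ≤ t * dist p q + δ → dist q z ≤ (1 - t) * dist p q + δ →
      dist p z' ≤ t * dist p q + δ → dist q z' ≤ (1 - t) * dist p q + δ →
      dist z z' ≤ ε := by
  intro ε hε
  have hπ := Real.pi_pos
  have h1t : 0 < 1 - t := by linarith
  have hda : 0 < (1 - t) * dist p q := mul_pos h1t hpq
  set a₀ : ℝ := (1 - t) * dist p q / 2 with ha₀def
  have ha₀ : 0 < a₀ := by rw [ha₀def]; linarith
  set A₁ : ℝ := (1 - t) * dist p q + a₀ with hA₁def
  have hA₁ : 0 < A₁ := by rw [hA₁def]; linarith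
  set K : ℝ := Real.pi ^ 2 * A₁ ^ 2 with hKdef
  have hK : 0 < K := by rw [hKdef]; positivity
  have hda₀ : 0 < dist p q / a₀ := div_pos hpq ha₀
  have hD1 : 0 < 4 * (K * (dist p q / a₀ + 1)) + 1 := by
    have h := mul_pos hK (show (0:ℝ) < dist p q / a₀ + 1 by linarith)
    linarith
  set θ : ℝ := ε ^ 2 / (4 * (K * (dist p q / a₀ + 1)) + 1) with hθdef
  have hθ : 0 < θ := div_pos (by positivity) hD1
  obtain ⟨r, hb, hrext⟩ := hext θ hθ
  have hib : (0:ℝ) < 1 / a₀ + 1 / dist q r := by positivity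
  have hD2 : 0 < 16 * (K * (1 / a₀ + 1 / dist q r)) + 1 := by
    have h := mul_pos hK hib
    linarith
  set δ : ℝ := min a₀ (min (ε / 4) (ε ^ 2 / (16 * (K * (1 / a₀ + 1 / dist q r)) + 1)))
    with hδdef
  have hδ : 0 < δ := lt_min ha₀ (lt_min (by linarith) (div_pos (by positivity) hD2))
  refine ⟨δ, hδ, ?_⟩
  intro z z' h1 h2 h3 h4
  have hδ1 : δ ≤ a₀ := min_le_left _ _
  have hδ2 : δ ≤ ε / 4 := (min_le_right _ _).trans (min_le_left _ _)
  have hδ3 : δ ≤ ε ^ 2 / (16 * (K * (1 / a₀ + 1 / dist q r)) + 1) :=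
    (min_le_right _ _).trans (min_le_right _ _)
  -- bounds on dist q z, dist q z'
  have htz : dist p q ≤ dist p z + dist q z := by
    have := dist_triangle p z q; rwa [dist_comm z q] at this
  have htz' : dist p q ≤ dist p z' + dist q z' := by
    have := dist_triangle p z' q; rwa [dist_comm z' q] at this
  have hAzlb : a₀ ≤ dist q z := by
    have : (1 - t) * dist p q - δ ≤ dist q z := by linarith
    have h2a : a₀ = (1 - t) * dist p q - a₀ := by rw [ha₀def]; ring
    linarith
  have hAz'lb : a₀ ≤ dist q z' := by
    have : (1 - t) * dist p q - δ ≤ dist q z' := by linarith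
    have h2a : a₀ = (1 - t) * dist p q - a₀ := by rw [ha₀def]; ring
    linarith
  have hAzub : dist q z ≤ A₁ := by rw [hA₁def]; linarith
  have hAz'ub : dist q z' ≤ A₁ := by rw [hA₁def]; linarith
  have hqz : q ≠ z := dist_pos.mp (lt_of_lt_of_le ha₀ hAzlb)
  have hqz' : q ≠ z' := dist_pos.mp (lt_of_lt_of_le ha₀ hAz'lb)
  have hqr : q ≠ r := dist_pos.mp hb
  set σ : ℝ := θ * min (dist q r) (dist p q) + 2 * δ with hσdef
  have hmin0 : 0 ≤ min (dist q r) (dist p q) := le_min dist_nonneg dist_nonneg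
  have hσ0 : 0 ≤ σ := by
    have := mul_nonneg hθ.le hmin0
    rw [hσdef]; linarith
  have hCz : dist q z + dist q r - σ ≤ dist z r := by
    have htr : dist p r ≤ dist p z + dist z r := dist_triangle p z r
    rw [hσdef]; linarith
  have hCz' : dist q z' + dist q r - σ ≤ dist z' r := by
    have htr : dist p r ≤ dist p z' + dist z' r := dist_triangle p z' r
    rw [hσdef]; linarith
  have hcore := pg_core hcbb hqz hqz' hqr hσ0 hσ0 hCz hCz'
  -- numeric estimates
  have e1 : (dist q z - dist q z') ^ 2 ≤ 4 * δ ^ 2 := by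
    have u := sq_le_sq' (show -(2*δ) ≤ dist q z - dist q z' by linarith)
      (show dist q z - dist q z' ≤ 2*δ by linarith)
    calc (dist q z - dist q z') ^ 2 ≤ (2*δ)^2 := u
      _ = 4 * δ ^ 2 := by ring
  have e2 : 1 / dist q z ≤ 1 / a₀ := one_div_le_one_div_of_le ha₀ hAzlb
  have e2' : 1 / dist q z' ≤ 1 / a₀ := one_div_le_one_div_of_le ha₀ hAz'lb
  set S : ℝ := σ * (1 / a₀ + 1 / dist q r) with hSdef
  have hS0 : 0 ≤ S := by rw [hSdef]; exact mul_nonneg hσ0 hib.le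
  have hSz : σ * (1 / dist q z + 1 / dist q r) ≤ S := by
    rw [hSdef]; exact mul_le_mul_of_nonneg_left (by linarith) hσ0
  have hSz' : σ * (1 / dist q z' + 1 / dist q r) ≤ S := by
    rw [hSdef]; exact mul_le_mul_of_nonneg_left (by linarith) hσ0
  have hAA' : dist q z * dist q z' ≤ A₁ ^ 2 := by
    calc dist q z * dist q z' ≤ A₁ * A₁ := mul_le_mul hAzub hAz'ub dist_nonneg hA₁.le
      _ = A₁ ^ 2 := by ring
  have big : Real.pi ^ 2 * (dist q z * dist q z') *
      (σ * (1 / dist q z + 1 / dist q r) + σ * (1 / dist q z' + 1 / dist q r))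
      ≤ K * (2 * S) := by
    calc Real.pi ^ 2 * (dist q z * dist q z') *
        (σ * (1 / dist q z + 1 / dist q r) + σ * (1 / dist q z' + 1 / dist q r))
        ≤ Real.pi ^ 2 * (dist q z * dist q z') * (2 * S) := by
          apply mul_le_mul_of_nonneg_left (by linarith) (by positivity)
      _ ≤ Real.pi ^ 2 * A₁ ^ 2 * (2 * S) := by
          apply mul_le_mul_of_nonneg_right
            (mul_le_mul_of_nonneg_left hAA' (by positivity)) (by linarith)
      _ = K * (2 * S) := by rw [hKdef]
  have split : K * (2 * S) =
      2 * K * θ * (min (dist q r) (dist p q) * (1 / a₀ + 1 / dist q r))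
      + 4 * K * δ * (1 / a₀ + 1 / dist q r) := by
    rw [hSdef, hσdef]; ring
  have m1 : min (dist q r) (dist p q) * (1 / a₀) ≤ dist p q * (1 / a₀) :=
    mul_le_mul_of_nonneg_right (min_le_right _ _) (by positivity)
  have m2 : min (dist q r) (dist p q) * (1 / dist q r) ≤ 1 := by
    rw [mul_one_div]; exact div_le_one_of_le₀ (min_le_left _ _) dist_nonneg
  have t1 : min (dist q r) (dist p q) * (1 / a₀ + 1 / dist q r)
      ≤ dist p q / a₀ + 1 := by
    have hx : min (dist q r) (dist p q) * (1 / a₀ + 1 / dist q r)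
        = min (dist q r) (dist p q) * (1 / a₀)
          + min (dist q r) (dist p q) * (1 / dist q r) := by ring
    rw [hx]
    have : dist p q * (1 / a₀) = dist p q / a₀ := by ring
    linarith
  have t1' : 2 * K * θ * (min (dist q r) (dist p q) * (1 / a₀ + 1 / dist q r))
      ≤ 2 * K * θ * (dist p q / a₀ + 1) :=
    mul_le_mul_of_nonneg_left t1 (by positivity)
  have t1'' : 2 * K * θ * (dist p q / a₀ + 1) ≤ ε ^ 2 / 2 := by
    have hmul : θ * (4 * (K * (dist p q / a₀ + 1)) + 1) = ε ^ 2 := by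
      rw [hθdef]; exact div_mul_cancel₀ _ hD1.ne'
    linarith [hθ.le, hmul]
  have t2 : 4 * K * δ * (1 / a₀ + 1 / dist q r) ≤ ε ^ 2 / 4 := by
    have hmul2 : (ε ^ 2 / (16 * (K * (1 / a₀ + 1 / dist q r)) + 1))
        * (16 * (K * (1 / a₀ + 1 / dist q r)) + 1) = ε ^ 2 :=
      div_mul_cancel₀ _ hD2.ne'
    have hδm : δ * (16 * (K * (1 / a₀ + 1 / dist q r)) + 1) ≤ ε ^ 2 := by
      have := mul_le_mul_of_nonneg_right hδ3 hD2.le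
      rw [hmul2] at this; exact this
    linarith [hδ.le]
  have e1' : 4 * δ ^ 2 ≤ ε ^ 2 / 4 := by
    have h := mul_le_mul hδ2 hδ2 hδ.le (by linarith : (0:ℝ) ≤ ε / 4)
    calc 4 * δ ^ 2 = 4 * (δ * δ) := by ring
      _ ≤ 4 * (ε / 4 * (ε / 4)) := by linarith
      _ = ε ^ 2 / 4 := by ring
  have final : dist z z' ^ 2 ≤ ε ^ 2 := by
    rw [split] at big
    linarith
  exact le_of_pow_le_pow_left₀ two_ne_zero hε.le final
/-- approximate `t`-points with dyadic precision, by induction. -/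
lemma pg_approx_aux (hlen : LengthMid L) :
    ∀ k : ℕ, ∀ x y : L, ∀ t ε : ℝ, 0 ≤ t → t ≤ 1 → 0 < ε →
      ∃ z : L, dist x z ≤ t * dist x y + dist x y / 2 ^ k + ε ∧
        dist z y ≤ (1 - t) * dist x y + dist x y / 2 ^ k + ε := by
  intro k
  induction k with
  | zero =>
    intro x y t ε ht0 ht1 hε
    refine ⟨x, ?_, ?_⟩
    · simp only [dist_self, pow_zero]
      positivity
    · have h : dist x y ≤ (1 - t) * dist x y + dist x y / 2 ^ 0 := by
        have := dist_nonneg (x := x) (y := y)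
        have h1 : 0 ≤ (1 - t) * dist x y := mul_nonneg (by linarith) this
        simp only [pow_zero]
        linarith
      calc dist x y ≤ (1 - t) * dist x y + dist x y / 2 ^ 0 := h
        _ ≤ _ := by linarith
  | succ k ih =>
    intro x y t ε ht0 ht1 hε
    obtain ⟨m, hm1, hm2⟩ := hlen x y (ε / 4) (by linarith)
    have hd : (0:ℝ) ≤ dist x y := dist_nonneg
    have hp : (0:ℝ) < 2 ^ k := by positivity
    rcases le_or_gt t (1/2) with hle | hgt
    · -- use pair (x, m) with parameter 2t
      obtain ⟨z, hz1, hz2⟩ := ih x m (2 * t) (ε / 4) (by linarith) (by linarith) (by linarith)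
      have hxm : dist x m ≤ dist x y / 2 + ε / 4 := hm1
      have hdm : (0:ℝ) ≤ dist x m := dist_nonneg
      refine ⟨z, ?_, ?_⟩
      · calc dist x z ≤ 2 * t * dist x m + dist x m / 2 ^ k + ε / 4 := hz1
          _ ≤ 2 * t * (dist x y / 2 + ε / 4) + (dist x y / 2 + ε / 4) / 2 ^ k + ε / 4 := by
            have e1 : 2 * t * dist x m ≤ 2 * t * (dist x y / 2 + ε / 4) :=
              mul_le_mul_of_nonneg_left hxm (by linarith)
            have e2 : dist x m / 2 ^ k ≤ (dist x y / 2 + ε / 4) / 2 ^ k :=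
              div_le_div_of_nonneg_right hxm hp.le
            linarith
          _ ≤ t * dist x y + dist x y / 2 ^ (k + 1) + ε := by
            have e3 : (dist x y / 2 + ε / 4) / 2 ^ k
                = dist x y / 2 ^ (k + 1) + ε / 4 / 2 ^ k := by
              rw [pow_succ]; ring
            have e4 : ε / 4 / 2 ^ k ≤ ε / 4 := by
              apply div_le_self (by linarith) (one_le_pow₀ (by norm_num))
            have e5 : 2 * t * (ε / 4) ≤ ε / 4 := by nlinarith
            linarith
      · calc dist z y ≤ dist z m + dist m y := dist_triangle z m y
          _ ≤ ((1 - 2 * t) * dist x m + dist x m / 2 ^ k + ε / 4)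
              + (dist x y / 2 + ε / 4) := by linarith [hz2, hm2]
          _ ≤ (1 - t) * dist x y + dist x y / 2 ^ (k + 1) + ε := by
            have e1 : (1 - 2 * t) * dist x m ≤ (1 - 2 * t) * (dist x y / 2 + ε / 4) :=
              mul_le_mul_of_nonneg_left hxm (by linarith)
            have e2 : dist x m / 2 ^ k ≤ (dist x y / 2 + ε / 4) / 2 ^ k :=
              div_le_div_of_nonneg_right hxm hp.le
            have e3 : (dist x y / 2 + ε / 4) / 2 ^ k
                = dist x y / 2 ^ (k + 1) + ε / 4 / 2 ^ k := by
              rw [pow_succ]; ring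
            have e4 : ε / 4 / 2 ^ k ≤ ε / 4 := by
              apply div_le_self (by linarith) (one_le_pow₀ (by norm_num))
            have e5 : (1 - 2 * t) * (ε / 4) ≤ ε / 4 := by nlinarith
            nlinarith
    · -- use pair (m, y) with parameter 2t - 1
      obtain ⟨z, hz1, hz2⟩ := ih m y (2 * t - 1) (ε / 4) (by linarith) (by linarith) (by linarith)
      have hmy : dist m y ≤ dist x y / 2 + ε / 4 := hm2
      have hdm : (0:ℝ) ≤ dist m y := dist_nonneg
      refine ⟨z, ?_, ?_⟩
      · calc dist x z ≤ dist x m + dist m z := dist_triangle x m z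
          _ ≤ (dist x y / 2 + ε / 4)
              + ((2 * t - 1) * dist m y + dist m y / 2 ^ k + ε / 4) := by linarith [hz1, hm1]
          _ ≤ t * dist x y + dist x y / 2 ^ (k + 1) + ε := by
            have e1 : (2 * t - 1) * dist m y ≤ (2 * t - 1) * (dist x y / 2 + ε / 4) :=
              mul_le_mul_of_nonneg_left hmy (by linarith)
            have e2 : dist m y / 2 ^ k ≤ (dist x y / 2 + ε / 4) / 2 ^ k :=
              div_le_div_of_nonneg_right hmy hp.le
            have e3 : (dist x y / 2 + ε / 4) / 2 ^ k
                = dist x y / 2 ^ (k + 1) + ε / 4 / 2 ^ k := by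
              rw [pow_succ]; ring
            have e4 : ε / 4 / 2 ^ k ≤ ε / 4 := by
              apply div_le_self (by linarith) (one_le_pow₀ (by norm_num))
            have e5 : (2 * t - 1) * (ε / 4) ≤ ε / 4 := by nlinarith
            nlinarith
      · calc dist z y ≤ (1 - (2 * t - 1)) * dist m y + dist m y / 2 ^ k + ε / 4 := hz2
          _ ≤ (1 - t) * dist x y + dist x y / 2 ^ (k + 1) + ε := by
            have e1 : (1 - (2 * t - 1)) * dist m y
                ≤ (1 - (2 * t - 1)) * (dist x y / 2 + ε / 4) :=
              mul_le_mul_of_nonneg_left hmy (by linarith)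
            have e2 : dist m y / 2 ^ k ≤ (dist x y / 2 + ε / 4) / 2 ^ k :=
              div_le_div_of_nonneg_right hmy hp.le
            have e3 : (dist x y / 2 + ε / 4) / 2 ^ k
                = dist x y / 2 ^ (k + 1) + ε / 4 / 2 ^ k := by
              rw [pow_succ]; ring
            have e4 : ε / 4 / 2 ^ k ≤ ε / 4 := by
              apply div_le_self (by linarith) (one_le_pow₀ (by norm_num))
            have e5 : (1 - (2 * t - 1)) * (ε / 4) ≤ ε / 4 := by nlinarith
            nlinarith

/-- approximate `t`-points. -/
lemma pg_approx (hlen : LengthMid L) (x y : L) {t : ℝ} (ht0 : 0 ≤ t) (ht1 : t ≤ 1)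
    {ε : ℝ} (hε : 0 < ε) :
    ∃ z : L, dist x z ≤ t * dist x y + ε ∧ dist z y ≤ (1 - t) * dist x y + ε := by
  obtain ⟨k, hk⟩ := pow_unbounded_of_one_lt (dist x y / (ε / 2)) (show (1:ℝ) < 2 by norm_num)
  have hp : (0:ℝ) < 2 ^ k := by positivity
  have hdk : dist x y / 2 ^ k ≤ ε / 2 := by
    rw [div_le_iff₀ hp]
    have h := (div_lt_iff₀ (by linarith : (0:ℝ) < ε / 2)).mp hk
    nlinarith
  obtain ⟨z, hz1, hz2⟩ := pg_approx_aux hlen k x y t (ε / 2) ht0 ht1 (by linarith)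
  exact ⟨z, by linarith, by linarith⟩
/-- Uniqueness of exact `t`-points. -/
lemma pg_unique_exact (hcbb : CBB0Cmp L) {p q : L} (hpq : 0 < dist p q)
    (hext : pg_Ext p q)
    {t : ℝ} (ht0 : 0 ≤ t) (ht1 : t ≤ 1) {z z' : L}
    (hz1 : dist p z = t * dist p q) (hz2 : dist q z = (1 - t) * dist p q)
    (hz1' : dist p z' = t * dist p q) (hz2' : dist q z' = (1 - t) * dist p q) :
    z = z' := by
  rcases eq_or_lt_of_le ht0 with h0 | h0
  · -- t = 0
    have e1 : dist p z = 0 := by rw [hz1, ← h0]; ring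
    have e2 : dist p z' = 0 := by rw [hz1', ← h0]; ring
    exact (dist_eq_zero.mp e1).symm.trans (dist_eq_zero.mp e2)
  rcases eq_or_lt_of_le ht1 with h1 | h1
  · -- t = 1
    have e1 : dist q z = 0 := by rw [hz2, h1]; ring
    have e2 : dist q z' = 0 := by rw [hz2', h1]; ring
    exact (dist_eq_zero.mp e1).symm.trans (dist_eq_zero.mp e2)
  · apply eq_of_forall_dist_le
    intro ε hε
    obtain ⟨δ, hδ, hu⟩ := pg_near_unique hcbb hpq hext h0 h1 ε hε
    exact hu z z' (by linarith [hz1]) (by linarith [hz2]) (by linarith [hz1'])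
      (by linarith [hz2'])

/-- Existence of exact `t`-points. -/
lemma pg_exact [CompleteSpace L] (hlen : LengthMid L) (hcbb : CBB0Cmp L) {p q : L}
    (hext : 0 < dist p q → pg_Ext p q) {t : ℝ} (ht0 : 0 ≤ t) (ht1 : t ≤ 1) :
    ∃ z : L, dist p z = t * dist p q ∧ dist q z = (1 - t) * dist p q := by
  rcases eq_or_lt_of_le (dist_nonneg (x := p) (y := q)) with hd | hd
  · refine ⟨p, ?_, ?_⟩
    · rw [dist_self, ← hd]; ring
    · rw [dist_comm q p, ← hd]; ring
  rcases eq_or_lt_of_le ht0 with h0 | h0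
  · exact ⟨p, by rw [dist_self, ← h0]; ring, by rw [dist_comm q p, ← h0]; ring⟩
  rcases eq_or_lt_of_le ht1 with h1 | h1
  · exact ⟨q, by rw [h1, one_mul], by rw [dist_self, h1]; ring⟩
  -- main case
  have H : ∀ k : ℕ, ∃ δ : ℝ, 0 < δ ∧ ∀ z z' : L,
      dist p z ≤ t * dist p q + δ → dist q z ≤ (1 - t) * dist p q + δ →
      dist p z' ≤ t * dist p q + δ → dist q z' ≤ (1 - t) * dist p q + δ →
      dist z z' ≤ 1 / (k + 1) := by
    intro k
    exact pg_near_unique hcbb hd (hext hd) h0 h1 (1 / (k + 1)) (by positivity)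
  choose δf hδf hδu using H
  -- monotone modulus
  set D : ℕ → ℝ := fun k =>
    Nat.rec (min (δf 0) 1) (fun n Dn => min (min (δf (n + 1)) (1 / (n + 2))) Dn) k with hD
  have hDpos : ∀ k, 0 < D k := by
    intro k
    induction k with
    | zero => exact lt_min (hδf 0) one_pos
    | succ n ih => exact lt_min (lt_min (hδf (n + 1)) (by positivity)) ih
  have hDle : ∀ k, D k ≤ δf k := by
    intro k
    cases k with
    | zero => exact min_le_left _ _
    | succ n => exact le_trans (min_le_left _ _) (min_le_left _ _)
  have hDmono : ∀ m k : ℕ, k ≤ m → D m ≤ D k := by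
    intro m
    induction m with
    | zero => intro k hk; interval_cases k; exact le_refl _
    | succ n ih =>
      intro k hk
      rcases Nat.lt_or_ge k (n + 1) with h | h
      · exact le_trans (min_le_right _ _) (ih k (Nat.lt_succ_iff.mp h))
      · have : k = n + 1 := le_antisymm hk h
        rw [this]
  have hDsmall : ∀ k, D k ≤ 1 / (k + 1) := by
    intro k
    cases k with
    | zero => exact le_trans (min_le_right _ _) (by norm_num)
    | succ n =>
      refine le_trans (le_trans (min_le_left _ _) (min_le_right _ _)) (le_of_eq ?_)
      push_cast
      ring
  -- approximate points
  have hz : ∀ k : ℕ, ∃ z : L, dist p z ≤ t * dist p q + D k ∧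
      dist q z ≤ (1 - t) * dist p q + D k := by
    intro k
    obtain ⟨z, hz1, hz2⟩ := pg_approx hlen p q ht0 ht1 (hDpos k)
    exact ⟨z, hz1, by rw [dist_comm q z]; exact hz2⟩
  choose z hz1 hz2 using hz
  -- Cauchy
  have hcauchy : CauchySeq z := by
    rw [Metric.cauchySeq_iff']
    intro ε hε
    obtain ⟨N, hN⟩ := exists_nat_one_div_lt hε
    refine ⟨N, fun n hn => ?_⟩
    have h1 : dist p (z n) ≤ t * dist p q + δf N :=
      le_trans (hz1 n) (by linarith [le_trans (hDmono n N hn) (hDle N)])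
    have h2 : dist q (z n) ≤ (1 - t) * dist p q + δf N :=
      le_trans (hz2 n) (by linarith [le_trans (hDmono n N hn) (hDle N)])
    have h3 : dist p (z N) ≤ t * dist p q + δf N :=
      le_trans (hz1 N) (by linarith [hDle N])
    have h4 : dist q (z N) ≤ (1 - t) * dist p q + δf N :=
      le_trans (hz2 N) (by linarith [hDle N])
    exact lt_of_le_of_lt (hδu N (z n) (z N) h1 h2 h3 h4) hN
  obtain ⟨w, hw⟩ := cauchySeq_tendsto_of_complete hcauchy
  have hdw1 : dist p w ≤ t * dist p q := by
    have hten : Filter.Tendsto (fun k => dist p (z k)) Filter.atTop (nhds (dist p w)) :=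
      Filter.Tendsto.dist tendsto_const_nhds hw
    have hten2 : Filter.Tendsto (fun k : ℕ => t * dist p q + 1 / (k + 1))
        Filter.atTop (nhds (t * dist p q + 0)) :=
      Filter.Tendsto.add tendsto_const_nhds tendsto_one_div_add_atTop_nhds_zero_nat
    rw [add_zero] at hten2
    exact le_of_tendsto_of_tendsto' hten hten2
      (fun k => le_trans (hz1 k) (by linarith [hDsmall k]))
  have hdw2 : dist q w ≤ (1 - t) * dist p q := by
    have hten : Filter.Tendsto (fun k => dist q (z k)) Filter.atTop (nhds (dist q w)) :=
      Filter.Tendsto.dist tendsto_const_nhds hw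
    have hten2 : Filter.Tendsto (fun k : ℕ => (1 - t) * dist p q + 1 / (k + 1))
        Filter.atTop (nhds ((1 - t) * dist p q + 0)) :=
      Filter.Tendsto.add tendsto_const_nhds tendsto_one_div_add_atTop_nhds_zero_nat
    rw [add_zero] at hten2
    exact le_of_tendsto_of_tendsto' hten hten2
      (fun k => le_trans (hz2 k) (by linarith [hDsmall k]))
  have htri : dist p q ≤ dist p w + dist q w := by
    have := dist_triangle p w q; rwa [dist_comm w q] at this
  exact ⟨w, by linarith, by linarith⟩

/-- Extension property propagates to subsegments. -/
lemma pg_ext_left {p q m : L} (hext : pg_Ext p q) (h1 : 0 < dist p m) (h2 : 0 < dist m q)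
    (hsum : dist p m + dist m q = dist p q) : pg_Ext p m := by
  intro θ hθ
  refine ⟨q, h2, ?_⟩
  have hm : 0 < min (dist m q) (dist p m) := lt_min h2 h1
  have := mul_pos hθ hm
  linarith


end pgAux

set_option maxHeartbeats 1000000 in
theorem plaut_gdelta_geodesic {L : Type*} [MetricSpace L] [CompleteSpace L]
    (hlen : LengthMid L) (hcbb : CBB0Cmp L) (p : L) :
    ∃ W : Set L, Dense W ∧ IsGδ W ∧ ∀ q ∈ W,
      (∃ γ : ℝ → L, IsGeodesicP γ p q) ∧
      (∀ γ₁ γ₂ : ℝ → L, IsGeodesicP γ₁ p q → IsGeodesicP γ₂ p q →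
        ∀ t ∈ Set.Icc (0:ℝ) 1, γ₁ t = γ₂ t) := by
  classical
  set U : ℕ → Set L := fun n =>
    {q | dist p q < 1 / (n + 1)} ∪
      ⋃ r : L, {q | 0 < dist q r ∧
        dist p q + dist q r - (1 / (n + 1)) * min (dist q r) (dist p q) < dist p r}
    with hU
  have hopen : ∀ n, IsOpen (U n) := by
    intro n
    apply IsOpen.union
    · exact isOpen_lt (continuous_const.dist continuous_id) continuous_const
    · apply isOpen_iUnion
      intro r
      apply IsOpen.and
      · exact isOpen_lt continuous_const (continuous_id.dist continuous_const)
      · apply isOpen_lt _ continuous_const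
        apply Continuous.sub
        · exact (continuous_const.dist continuous_id).add
            (continuous_id.dist continuous_const)
        · exact continuous_const.mul
            ((continuous_id.dist continuous_const).min (continuous_const.dist continuous_id))
  have hdense : ∀ n, Dense (U n) := by
    intro n
    rw [Metric.dense_iff]
    intro x ε hε
    by_cases hx : dist p x < 1 / (n + 1)
    · exact ⟨x, Metric.mem_ball_self hε, Or.inl hx⟩
    · push_neg at hx
      have hn1 : (0:ℝ) < 1 / (n + 1) := by positivity
      have hn1' : (1:ℝ) ≤ (n:ℝ) + 1 := by
        have : (0:ℝ) ≤ n := Nat.cast_nonneg n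
        linarith
      have hd₀ : 0 < dist p x := lt_of_lt_of_le hn1 hx
      set u : ℝ := min (ε / (2 * dist p x)) (1 / 2) with hudef
      have hu : 0 < u := lt_min (by positivity) (by norm_num)
      have hu2 : u ≤ 1 / 2 := min_le_right _ _
      have hud : 0 < u * dist p x := mul_pos hu hd₀
      have huε : u * dist p x ≤ ε / 2 := by
        have h := min_le_left (ε / (2 * dist p x)) (1 / 2)
        calc u * dist p x ≤ ε / (2 * dist p x) * dist p x :=
            mul_le_mul_of_nonneg_right h hd₀.le
          _ = ε / 2 := by field_simp
      have hn1le : (1:ℝ) / (n + 1) ≤ 1 := by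
        rw [div_le_one (by linarith)]; linarith
      set ε' : ℝ := 1 / (n + 1) * (u * dist p x) / 8 with hε'def
      have hε' : 0 < ε' := by positivity
      have hε'le : ε' ≤ u * dist p x / 4 := by
        rw [hε'def]
        have h := mul_le_mul_of_nonneg_right hn1le hud.le
        rw [one_mul] at h
        linarith
      obtain ⟨z, hz1, hz2⟩ := pg_approx hlen p x (t := 1 - u) (by linarith) (by linarith) hε'
      rw [show (1 - (1 - u)) = u by ring] at hz2
      have htri : dist p x ≤ dist p z + dist z x := dist_triangle p z x
      have hzx_lb : u * dist p x - ε' ≤ dist z x := by linarith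
      have hzx_pos : 0 < dist z x := by linarith
      have hpz_lb : u * dist p x / 2 ≤ dist p z := by
        have hud2 : u * dist p x ≤ 1 / 2 * dist p x := mul_le_mul_of_nonneg_right hu2 hd₀.le
        linarith
      have hmin : u * dist p x / 2 ≤ min (dist z x) (dist p z) :=
        le_min (by linarith) hpz_lb
      refine ⟨z, ?_, Or.inr ?_⟩
      · rw [Metric.mem_ball]
        calc dist z x ≤ u * dist p x + ε' := hz2
          _ ≤ ε / 2 + ε / 2 / 4 := by linarith
          _ < ε := by linarith
      · rw [Set.mem_iUnion]
        refine ⟨x, hzx_pos, ?_⟩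
        have hc2 : 4 * ε' ≤ (1 / (n + 1)) * min (dist z x) (dist p z) := by
          have h := mul_le_mul_of_nonneg_left hmin hn1.le
          have he : (4:ℝ) * ε' = (1 / (n + 1)) * (u * dist p x / 2) := by
            rw [hε'def]; ring
          linarith
        have hc1 : dist p z + dist z x ≤ dist p x + 2 * ε' := by linarith
        refine lt_of_le_of_lt (?_ : _ ≤ dist p x - 2 * ε') (by linarith)
        linarith
  refine ⟨⋂ n, U n, dense_iInter_of_isOpen hopen hdense, .iInter fun n => (hopen n).isGδ, ?_⟩
  intro q hq
  have hmem0 : (0:ℝ) ∈ Set.Icc (0:ℝ) 1 := ⟨le_refl _, by norm_num⟩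
  have hmem1 : (1:ℝ) ∈ Set.Icc (0:ℝ) 1 := ⟨by norm_num, le_refl _⟩
  rcases eq_or_ne p q with rfl | hpq
  · constructor
    · exact ⟨fun _ => p, rfl, rfl, fun s _ t _ => by simp⟩
    · intro γ₁ γ₂ hg₁ hg₂ t ht
      have h1 : dist (γ₁ 0) (γ₁ t) = |0 - t| * dist p p := hg₁.2.2 0 hmem0 t ht
      have h2 : dist (γ₂ 0) (γ₂ t) = |0 - t| * dist p p := hg₂.2.2 0 hmem0 t ht
      rw [dist_self, mul_zero] at h1 h2
      rw [hg₁.1] at h1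
      rw [hg₂.1] at h2
      rw [← dist_eq_zero.mp h1, ← dist_eq_zero.mp h2]
  · have hd : 0 < dist p q := dist_pos.mpr hpq
    have hext : pg_Ext p q := by
      intro θ hθ
      obtain ⟨n, hn⟩ := exists_nat_one_div_lt (lt_min hθ hd)
      have hqn : q ∈ U n := Set.mem_iInter.mp hq n
      rcases hqn with h | h
      · exfalso
        have h' : dist p q < 1 / (n + 1) := h
        have h2 : (1 / (n + 1) : ℝ) < dist p q := lt_of_lt_of_le hn (min_le_right _ _)
        linarith
      · rw [Set.mem_iUnion] at h
        obtain ⟨r, h0, hlt⟩ := h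
        refine ⟨r, h0, lt_of_le_of_lt ?_ hlt⟩
        have hm0 : 0 ≤ min (dist q r) (dist p q) := le_min dist_nonneg dist_nonneg
        have hθn : (1 / (n + 1) : ℝ) ≤ θ := (lt_of_lt_of_le hn (min_le_left _ _)).le
        have := mul_le_mul_of_nonneg_right hθn hm0
        linarith
    have hexact : ∀ t : ℝ, t ∈ Set.Icc (0:ℝ) 1 →
        ∃ z : L, dist p z = t * dist p q ∧ dist q z = (1 - t) * dist p q :=
      fun t ht => pg_exact hlen hcbb (fun _ => hext) ht.1 ht.2
    set γ : ℝ → L := fun t =>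
      if ht : t ∈ Set.Icc (0:ℝ) 1 then (hexact t ht).choose else p with hγdef
    have hγspec : ∀ t (ht : t ∈ Set.Icc (0:ℝ) 1),
        dist p (γ t) = t * dist p q ∧ dist q (γ t) = (1 - t) * dist p q := by
      intro t ht
      rw [hγdef]
      simp only [dif_pos ht]
      exact (hexact t ht).choose_spec
    have hγ0 : γ 0 = p := by
      have := (hγspec 0 hmem0).1
      rw [zero_mul] at this
      exact (dist_eq_zero.mp this).symm
    have hγ1 : γ 1 = q := by
      have := (hγspec 1 hmem1).2
      rw [show (1:ℝ) - 1 = 0 by ring, zero_mul] at this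
      exact (dist_eq_zero.mp this).symm
    have key : ∀ s ∈ Set.Icc (0:ℝ) 1, ∀ t ∈ Set.Icc (0:ℝ) 1, s ≤ t →
        dist (γ s) (γ t) = (t - s) * dist p q := by
      intro s hs t ht hst
      rcases eq_or_lt_of_le ht.1 with ht0 | ht0
      · have hs0 : s = 0 := le_antisymm (by linarith) hs.1
        rw [hs0, ← ht0, dist_self]
        ring
      · obtain ⟨hpt, hqt⟩ := hγspec t ht
        obtain ⟨hps, hqs⟩ := hγspec s hs
        have htne : t ≠ 0 := ht0.ne'
        have hptpos : 0 < dist p (γ t) := by rw [hpt]; positivity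
        have hext' : pg_Ext p (γ t) := by
          rcases eq_or_lt_of_le ht.2 with ht1 | ht1
          · have hgtq : γ t = q := by
              have h : dist q (γ t) = 0 := by rw [hqt, ← ht1]; ring
              exact (dist_eq_zero.mp h).symm
            rw [hgtq]; exact hext
          · apply pg_ext_left hext hptpos
            · rw [dist_comm, hqt]; nlinarith
            · rw [dist_comm (γ t) q, hpt, hqt]; ring
        obtain ⟨w, hw1, hw2⟩ := pg_exact hlen hcbb (p := p) (q := γ t) (fun _ => hext')
          (t := s / t) (div_nonneg hs.1 ht0.le) ((div_le_one ht0).mpr hst)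
        have hw1' : dist p w = s * dist p q := by
          rw [hw1, hpt]; field_simp
        have hw2' : dist (γ t) w = (t - s) * dist p q := by
          rw [hw2, hpt]; field_simp; try ring
        have hqw : dist q w = (1 - s) * dist p q := by
          have hub : dist q w ≤ dist q (γ t) + dist (γ t) w := dist_triangle q (γ t) w
          have hlb : dist p q ≤ dist p w + dist q w := by
            have h := dist_triangle p w q; rwa [dist_comm w q] at h
          rw [hqt, hw2'] at hub
          rw [hw1'] at hlb
          linarith
        have hsw : γ s = w := pg_unique_exact hcbb hd hext hs.1 hs.2 hps hqs hw1' hqw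
        rw [hsw, dist_comm]
        exact hw2'
    constructor
    · refine ⟨γ, hγ0, hγ1, ?_⟩
      intro s hs t ht
      rcases le_total s t with h | h
      · rw [key s hs t ht h, abs_of_nonpos (by linarith)]
        try ring
      · rw [dist_comm, key t ht s hs h, abs_of_nonneg (by linarith)]
        try ring
    · intro γ₁ γ₂ hg₁ hg₂ t ht
      have spec : ∀ γ' : ℝ → L, IsGeodesicP γ' p q →
          dist p (γ' t) = t * dist p q ∧ dist q (γ' t) = (1 - t) * dist p q := by
        intro γ' hg
        obtain ⟨h0, h1, hdist⟩ := hg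
        constructor
        · have h := hdist 0 hmem0 t ht
          rw [h0] at h
          rw [h, abs_of_nonpos (by linarith [ht.1])]
          try ring
        · have h := hdist 1 hmem1 t ht
          rw [h1] at h
          rw [h, abs_of_nonneg (by linarith [ht.2])]
          try ring
      obtain ⟨h1, h2⟩ := spec γ₁ hg₁
      obtain ⟨h1', h2'⟩ := spec γ₂ hg₂
      exact pg_unique_exact hcbb hd hext ht.1 ht.2 h1 h2 h1' h2'
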